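/- For words w, w' in the stuffle algebra H^0 whose associated CMSPL series converge ∞-adically (i.e. whose generators z_{s,u} satisfy |u|_∞ < q^{sq/(q-1)} in the first position and ≤ elsewhere as in the domain D^{Conv}), the values satisfy Li*(w ⋆ w') = Li*(w) · Li*(w') in C_∞. -/

import Mathlib

/-- Stuffle product of words (letters are pairs `(s,u)`), valued in the free
`F`-module on words. -/
noncomputable def stuffleW {F : Type*} [Field F] :
    List (ℕ × F) → List (ℕ × F) → (List (ℕ × F) →₀ F)
  | [], w => Finsupp.single w 1
  | x :: w, [] => Finsupp.single (x :: w) 1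
  | x :: w, y :: w' =>
      Finsupp.mapDomain (fun l => x :: l) (stuffleW w (y :: w')) +
      Finsupp.mapDomain (fun l => y :: l) (stuffleW (x :: w) w') -
      Finsupp.mapDomain (fun l => (x.1 + y.1, x.2 * y.2) :: l) (stuffleW w w')
  termination_by w w' => w.length + w'.length

/-- Truncated star polylogarithm `Li*^{≤n}` on words. -/
noncomputable def liTrunc {F : Type*} [Field F] (q : ℕ) (Lval : ℕ → F) :
    ℕ → List (ℕ × F) → F
  | _, [] => 1
  | n, (s, u) :: w =>
      ∑ i ∈ Finset.range (n + 1), u ^ q ^ i / (Lval i) ^ s * liTrunc q Lval i w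
  termination_by n w => w.length

/-- A word lies in the ∞-adic convergence domain `D^Conv`: all letters `(s,u)` have
`s ≥ 1` and `|u|_∞ ≤ q^{sq/(q-1)}`, with strict inequality for the first letter. -/
def ConvWord (q : ℕ) {F : Type*} [NormedField F] (w : List (ℕ × F)) : Prop :=
  (∀ p ∈ w, 1 ≤ p.1) ∧
  (∀ p ∈ w, ‖p.2‖ ≤ (q : ℝ) ^ (((p.1 * q : ℕ) : ℝ) / ((q : ℝ) - 1))) ∧
  (∀ p : ℕ × F, w.head? = some p →
    ‖p.2‖ < (q : ℝ) ^ (((p.1 * q : ℕ) : ℝ) / ((q : ℝ) - 1)))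

lemma liTrunc_nil {F : Type*} [Field F] (q : ℕ) (Lval : ℕ → F) (n : ℕ) :
    liTrunc q Lval n [] = 1 := by rw [liTrunc]

lemma liTrunc_cons {F : Type*} [Field F] (q : ℕ) (Lval : ℕ → F) (n s : ℕ) (u : F)
    (w : List (ℕ × F)) :
    liTrunc q Lval n ((s, u) :: w)
      = ∑ i ∈ Finset.range (n + 1), u ^ q ^ i / (Lval i) ^ s * liTrunc q Lval i w := by
  rw [liTrunc]

lemma split_sum {F : Type*} [CommRing F] (n : ℕ) (f g : ℕ → F) :
    (∑ i ∈ Finset.range (n+1), f i) * (∑ j ∈ Finset.range (n+1), g j)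
      = (∑ i ∈ Finset.range (n+1), f i * ∑ j ∈ Finset.range (i+1), g j)
      + (∑ j ∈ Finset.range (n+1), g j * ∑ i ∈ Finset.range (j+1), f i)
      - ∑ i ∈ Finset.range (n+1), f i * g i := by
  induction n with
  | zero => simp; ring
  | succ n ih =>
      rw [Finset.sum_range_succ f (n+1), Finset.sum_range_succ g (n+1),
        Finset.sum_range_succ (fun i => f i * ∑ j ∈ Finset.range (i+1), g j) (n+1),
        Finset.sum_range_succ (fun j => g j * ∑ i ∈ Finset.range (j+1), f i) (n+1),
        Finset.sum_range_succ (fun i => f i * g i) (n+1),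
        Finset.sum_range_succ g (n+1), Finset.sum_range_succ f (n+1)]
      linear_combination ih

lemma lc_cons {F : Type*} [Field F] (q : ℕ) (Lval : ℕ → F) (n s : ℕ) (u : F)
    (S : List (ℕ × F) →₀ F) :
    Finsupp.linearCombination F (fun l => liTrunc q Lval n ((s, u) :: l)) S
      = ∑ i ∈ Finset.range (n+1), u ^ q ^ i / (Lval i) ^ s *
          Finsupp.linearCombination F (liTrunc q Lval i) S := by
  simp only [Finsupp.linearCombination_apply, Finsupp.sum, liTrunc_cons, Finset.mul_sum,
    smul_eq_mul]
  rw [Finset.sum_comm]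
  exact Finset.sum_congr rfl fun i _ => Finset.sum_congr rfl fun l _ => by ring

lemma liTrunc_stuffle {F : Type*} [Field F] (q : ℕ) (Lval : ℕ → F)
    (w w' : List (ℕ × F)) : ∀ n : ℕ,
    Finsupp.linearCombination F (liTrunc q Lval n) (stuffleW w w')
      = liTrunc q Lval n w * liTrunc q Lval n w' := by
  induction w, w' using stuffleW.induct with
  | case1 w => intro n; rw [stuffleW]; simp [liTrunc_nil]
  | case2 x w => intro n; rw [stuffleW]; simp [liTrunc_nil]
  | case3 x w y w' ih1 ih2 ih3 =>
      intro n
      obtain ⟨s, u⟩ := x; obtain ⟨t, v⟩ := y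
      rw [stuffleW]
      simp only [map_add, map_sub, Finsupp.linearCombination_mapDomain, Function.comp_def]
      rw [lc_cons, lc_cons, lc_cons]
      simp only [ih1, ih2, ih3]
      rw [liTrunc_cons q Lval n s u w, liTrunc_cons q Lval n t v w',
        split_sum n (fun i => u ^ q ^ i / (Lval i) ^ s * liTrunc q Lval i w)
          (fun j => v ^ q ^ j / (Lval j) ^ t * liTrunc q Lval j w')]
      congr 1
      congr 1
      · exact Finset.sum_congr rfl fun i _ => by rw [liTrunc_cons]; ring
      · exact Finset.sum_congr rfl fun j _ => by rw [liTrunc_cons]; ring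
      · exact Finset.sum_congr rfl fun i _ => by rw [mul_pow, pow_add]; ring
def WeakWord (q : ℕ) {F : Type*} [NormedField F] (w : List (ℕ × F)) : Prop :=
  (∀ p ∈ w, 1 ≤ p.1) ∧
  (∀ p ∈ w, ‖p.2‖ ≤ (q : ℝ) ^ (((p.1 * q : ℕ) : ℝ) / ((q : ℝ) - 1)))

lemma bnd_pos {q : ℕ} (hq : 2 ≤ q) (s : ℕ) :
    0 < (q : ℝ) ^ (((s * q : ℕ) : ℝ) / ((q : ℝ) - 1)) :=
  Real.rpow_pos_of_pos (by positivity) _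

lemma bnd_mul {q : ℕ} (hq : 2 ≤ q) (s t : ℕ) :
    (q : ℝ) ^ (((s * q : ℕ) : ℝ) / ((q : ℝ) - 1)) *
      (q : ℝ) ^ (((t * q : ℕ) : ℝ) / ((q : ℝ) - 1))
      = (q : ℝ) ^ ((((s + t) * q : ℕ) : ℝ) / ((q : ℝ) - 1)) := by
  rw [← Real.rpow_add (by positivity : (0:ℝ) < q), ← add_div]
  congr 1
  push_cast
  ring

lemma weak_cons_iff {q : ℕ} {F : Type*} [NormedField F] {x : ℕ × F} {w : List (ℕ × F)} :
    WeakWord q (x :: w) ↔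
      (1 ≤ x.1 ∧ ‖x.2‖ ≤ (q : ℝ) ^ (((x.1 * q : ℕ) : ℝ) / ((q : ℝ) - 1))) ∧ WeakWord q w := by
  constructor
  · intro h
    exact ⟨⟨h.1 x (List.mem_cons_self), h.2 x (List.mem_cons_self)⟩,
      fun p hp => h.1 p (List.mem_cons_of_mem _ hp),
      fun p hp => h.2 p (List.mem_cons_of_mem _ hp)⟩
  · rintro ⟨hx, hw⟩
    refine ⟨fun p hp => ?_, fun p hp => ?_⟩ <;> rcases List.mem_cons.1 hp with h | h
    · exact h ▸ hx.1
    · exact hw.1 p h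
    · exact h ▸ hx.2
    · exact hw.2 p h

lemma weak_stuffle {q : ℕ} (hq : 2 ≤ q) {F : Type*} [NormedField F] :
    ∀ v v' : List (ℕ × F), WeakWord q v → WeakWord q v' →
      ∀ l ∈ (stuffleW v v').support, WeakWord q l := by
  intro v v'
  induction v, v' using stuffleW.induct with
  | case1 w =>
      intro _ hw l hl
      rw [stuffleW] at hl
      have := Finsupp.support_single_subset hl
      simp only [Finset.mem_singleton] at this
      exact this ▸ hw
  | case2 x w =>
      intro hw _ l hl
      rw [stuffleW] at hl
      have := Finsupp.support_single_subset hl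
      simp only [Finset.mem_singleton] at this
      exact this ▸ hw
  | case3 x w y w' ih1 ih2 ih3 =>
      intro hxw hyw' l hl
      rw [stuffleW] at hl
      have hxw' := (weak_cons_iff.1 hxw)
      have hyw'' := (weak_cons_iff.1 hyw')
      classical
      have h1 := Finsupp.support_sub hl
      rcases Finset.mem_union.1 h1 with h2 | h2
      · rcases Finset.mem_union.1 (Finsupp.support_add h2) with h3 | h3
        · obtain ⟨l', hl', rfl⟩ := Finset.mem_image.1 (Finsupp.mapDomain_support h3)
          exact weak_cons_iff.2 ⟨hxw'.1, ih1 hxw'.2 hyw' l' hl'⟩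
        · obtain ⟨l', hl', rfl⟩ := Finset.mem_image.1 (Finsupp.mapDomain_support h3)
          exact weak_cons_iff.2 ⟨hyw''.1, ih2 hxw hyw''.2 l' hl'⟩
      · obtain ⟨l', hl', rfl⟩ := Finset.mem_image.1 (Finsupp.mapDomain_support h2)
        refine weak_cons_iff.2 ⟨⟨le_trans hxw'.1.1 (Nat.le_add_right _ _), ?_⟩,
          ih3 hxw'.2 hyw''.2 l' hl'⟩
        calc ‖x.2 * y.2‖ = ‖x.2‖ * ‖y.2‖ := norm_mul _ _
          _ ≤ ((q:ℝ) ^ (((x.1 * q : ℕ) : ℝ) / ((q : ℝ) - 1))) *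
              ((q:ℝ) ^ (((y.1 * q : ℕ) : ℝ) / ((q : ℝ) - 1))) :=
            mul_le_mul hxw'.1.2 hyw''.1.2 (norm_nonneg _) (le_of_lt (bnd_pos hq _))
          _ = _ := bnd_mul hq _ _

lemma conv_weak {q : ℕ} {F : Type*} [NormedField F] {w : List (ℕ × F)}
    (h : ConvWord q w) : WeakWord q w := ⟨h.1, h.2.1⟩

lemma conv_stuffle {q : ℕ} (hq : 2 ≤ q) {F : Type*} [NormedField F]
    (w w' : List (ℕ × F)) (hw : ConvWord q w) (hw' : ConvWord q w') :
    ∀ l ∈ (stuffleW w w').support, ConvWord q l := by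
  classical
  match w, w' with
  | [], w' =>
      intro l hl
      rw [stuffleW] at hl
      have := Finsupp.support_single_subset hl
      simp only [Finset.mem_singleton] at this
      exact this ▸ hw'
  | x :: w, [] =>
      intro l hl
      rw [stuffleW] at hl
      have := Finsupp.support_single_subset hl
      simp only [Finset.mem_singleton] at this
      exact this ▸ hw
  | x :: w, y :: w' =>
      intro l hl
      rw [stuffleW] at hl
      have hxs : 1 ≤ x.1 := hw.1 x (List.mem_cons_self)
      have hxh : ‖x.2‖ < (q : ℝ) ^ (((x.1 * q : ℕ) : ℝ) / ((q : ℝ) - 1)) := hw.2.2 x rfl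
      have hyh : ‖y.2‖ < (q : ℝ) ^ (((y.1 * q : ℕ) : ℝ) / ((q : ℝ) - 1)) := hw'.2.2 y rfl
      have hwt : WeakWord q w := weak_cons_iff.1 (conv_weak hw) |>.2
      have hwt' : WeakWord q w' := weak_cons_iff.1 (conv_weak hw') |>.2
      have conv_of : ∀ (p : ℕ × F) (l' : List (ℕ × F)),
          1 ≤ p.1 → ‖p.2‖ < (q : ℝ) ^ (((p.1 * q : ℕ) : ℝ) / ((q : ℝ) - 1)) →
          WeakWord q l' → ConvWord q (p :: l') := by
        intro p l' h1 h2 h3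
        refine ⟨(weak_cons_iff.2 ⟨⟨h1, le_of_lt h2⟩, h3⟩).1,
          (weak_cons_iff.2 ⟨⟨h1, le_of_lt h2⟩, h3⟩).2, ?_⟩
        intro p' hp'
        simp only [List.head?_cons, Option.some.injEq] at hp'
        exact hp' ▸ h2
      have h1 := Finsupp.support_sub hl
      rcases Finset.mem_union.1 h1 with h2 | h2
      · rcases Finset.mem_union.1 (Finsupp.support_add h2) with h3 | h3
        · obtain ⟨l', hl', rfl⟩ := Finset.mem_image.1 (Finsupp.mapDomain_support h3)
          exact conv_of x l' hxs hxh (weak_stuffle hq w (y :: w') hwt (conv_weak hw') l' hl')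
        · obtain ⟨l', hl', rfl⟩ := Finset.mem_image.1 (Finsupp.mapDomain_support h3)
          exact conv_of y l' (hw'.1 y (List.mem_cons_self)) hyh
            (weak_stuffle hq (x :: w) w' (conv_weak hw) hwt' l' hl')
      · obtain ⟨l', hl', rfl⟩ := Finset.mem_image.1 (Finsupp.mapDomain_support h2)
        refine conv_of _ l' (le_trans hxs (Nat.le_add_right _ _)) ?_
          (weak_stuffle hq w w' hwt hwt' l' hl')
        show ‖x.2 * y.2‖ < _
        rw [norm_mul, ← bnd_mul hq]
        calc ‖x.2‖ * ‖y.2‖ ≤ ((q:ℝ) ^ (((x.1 * q : ℕ) : ℝ) / ((q : ℝ) - 1))) * ‖y.2‖ :=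
              mul_le_mul_of_nonneg_right (le_of_lt hxh) (norm_nonneg _)
          _ < _ := mul_lt_mul_of_pos_left hyh (bnd_pos hq _)

/-- for words `w, w'` in the stuffle algebra whose CMSPL series converge
∞-adically (domain `D^Conv`), the values `Li*(w) := lim_n Li*^{≤n}(w)` satisfy
`Li*(w ⋆ w') = Li*(w)·Li*(w')` in `C_∞`. -/
theorem stmt_8 (q : ℕ) (hq : 2 ≤ q)
    (F : Type*) [NormedField F] [CompleteSpace F]
    (hna : IsNonarchimedean (norm : F → ℝ))
    (Lval : ℕ → F) (hL0 : ∀ i, Lval i ≠ 0)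
    (hLnorm : ∀ i : ℕ,
      ‖Lval i‖ = (q : ℝ) ^ ((((q : ℝ) ^ (i + 1) - (q : ℝ)) / ((q : ℝ) - 1))))
    (LiS : List (ℕ × F) → F)
    (hLiS : ∀ w : List (ℕ × F), ConvWord q w →
      Filter.Tendsto (fun n => liTrunc q Lval n w) Filter.atTop (nhds (LiS w)))
    (w w' : List (ℕ × F)) (hw : ConvWord q w) (hw' : ConvWord q w') :
    ((stuffleW w w').sum fun w'' a => a * LiS w'') = LiS w * LiS w' := by
  classical
  have hconv := conv_stuffle hq w w' hw hw'
  have key : ∀ n, (∑ l ∈ (stuffleW w w').support, stuffleW w w' l * liTrunc q Lval n l)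
      = liTrunc q Lval n w * liTrunc q Lval n w' := by
    intro n
    simpa [Finsupp.linearCombination_apply, Finsupp.sum, smul_eq_mul] using
      liTrunc_stuffle q Lval w w' n
  have h1 : Filter.Tendsto
      (fun n => ∑ l ∈ (stuffleW w w').support, stuffleW w w' l * liTrunc q Lval n l)
      Filter.atTop (nhds (∑ l ∈ (stuffleW w w').support, stuffleW w w' l * LiS l)) :=
    tendsto_finset_sum _ fun l hl => Filter.Tendsto.const_mul _ (hLiS l (hconv l hl))
  simp only [key] at h1
  have h2 := (hLiS w hw).mul (hLiS w' hw')
  have h3 := tendsto_nhds_unique h1 h2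
  rw [Finsupp.sum]
  exact h3
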